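/- Let y, w, dy, dw ∈ ℝ^m, let σ ∈ ℝ, set μ := (yᵀw)/m, and suppose the perturbed complementarity equations w_j dy_j + y_j dw_j = −w_j y_j + σ μ hold for every j = 1,…,m. Then for every scalar t ∈ ℝ, (w + t·dw)ᵀ(y + t·dy) = (1 − t)·wᵀy + σ t·wᵀy + t²·(dw)ᵀ(dy). -/

import Mathlib

/-- If the perturbed complementarity equations
`w_j dy_j + y_j dw_j = -w_j y_j + σ μ` hold for all `j`, with `μ = (yᵀw)/m`, then
for every scalar `t`,
`(w + t dw)ᵀ(y + t dy) = (1 - t) wᵀy + σ t wᵀy + t² (dw)ᵀ(dy)`. -/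
theorem complementarity_along_arc
    (m : ℕ) (y w dy dw : Fin m → ℝ) (σ : ℝ)
    (hPert : ∀ j : Fin m, w j * dy j + y j * dw j
      = -(w j * y j) + σ * ((∑ i, y i * w i) / m)) :
    ∀ t : ℝ,
      ∑ j, (w j + t * dw j) * (y j + t * dy j)
        = (1 - t) * (∑ j, w j * y j) + σ * t * (∑ j, w j * y j)
          + t ^ 2 * ∑ j, dw j * dy j := by
  intro t
  have hcross : ∑ j, (w j * dy j + y j * dw j)
      = -(∑ j, w j * y j) + σ * (∑ j, w j * y j) := by
    rcases Nat.eq_zero_or_pos m with hm | hm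
    · subst hm; simp
    · have hsum : ∑ j, (w j * dy j + y j * dw j)
          = ∑ j : Fin m, (-(w j * y j) + σ * ((∑ i, y i * w i) / m)) := by
        exact Finset.sum_congr rfl fun j _ => hPert j
      rw [hsum, Finset.sum_add_distrib, Finset.sum_neg_distrib, Finset.sum_const,
        Finset.card_univ, Fintype.card_fin]
      have hm' : (m : ℝ) ≠ 0 := Nat.cast_ne_zero.mpr hm.ne'
      have : ∑ i, y i * w i = ∑ i, w i * y i := by
        exact Finset.sum_congr rfl fun i _ => mul_comm _ _
      rw [this]
      rw [nsmul_eq_mul]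
      field_simp
  have expand : ∑ j, (w j + t * dw j) * (y j + t * dy j)
      = ∑ j, w j * y j + t * ∑ j, (w j * dy j + y j * dw j)
        + t ^ 2 * ∑ j, dw j * dy j := by
    rw [Finset.mul_sum, Finset.mul_sum, ← Finset.sum_add_distrib, ← Finset.sum_add_distrib]
    exact Finset.sum_congr rfl fun j _ => by ring
  rw [expand, hcross]; ring
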